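/- arXiv:2510.16638 — 2 statements merged into one kernel-verified Lean document; each statement's English description precedes it below -/
import Mathlib

section
/- Assume m = k (the case σ = τ, so S = {u ∈ ℤ^n : ⟨p_r, u⟩ ≥ 0 for r = 1, …, k}). Then the set of points equipped with the operation * is a group with identity element x_τ: * is associative, x_τ is a two-sided identity, and every point has a two-sided inverse. (This is the point-level statement of Proposition 3.3: the comultiplication χ^u ↦ χ^u ⊗ χ^u ∏_r (1 ⊗ χ^{e_1^{(r)}} + χ^{e_2^{(r)}} ⊗ 1)^{⟨p_r,u⟩} on K[S_τ] gives the group multiplication of the semidirect product G_χ̄ = 𝔾_a^k ⋊ T.) -/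
open Finset

def pairZ {n : ℕ} (v u : Fin n → ℤ) : ℤ := ∑ i, v i * u i

def InS {n m : ℕ} (q : Fin m → Fin n → ℤ) (u : Fin n → ℤ) : Prop :=
  ∀ j, 0 ≤ pairZ (q j) u

def IsPoint {n m : ℕ} {K : Type*} [Field K] (q : Fin m → Fin n → ℤ)
    (x : (Fin n → ℤ) → K) : Prop :=
  x 0 = 1 ∧ ∀ u v : Fin n → ℤ, InS q u → InS q v → x (u + v) = x u * x v

def Compatible {n m k : ℕ} (hkm : k ≤ m) (q : Fin m → Fin n → ℤ)
    (e : Fin k → Fin n → ℤ) : Prop :=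
  (∀ r s : Fin k, pairZ (q (Fin.castLE hkm s)) (e r) = if r = s then -1 else 0) ∧
  (∀ (r : Fin k) (j : Fin m), k ≤ (j : ℕ) → 0 ≤ pairZ (q j) (e r))

noncomputable def rmul {n m k : ℕ} {K : Type*} [Field K] (hkm : k ≤ m)
    (q : Fin m → Fin n → ℤ) (e1 e2 : Fin k → Fin n → ℤ)
    (x y : (Fin n → ℤ) → K) : (Fin n → ℤ) → K :=
  fun u =>
    ∑ i ∈ Fintype.piFinset (fun r : Fin k =>
        Finset.range ((pairZ (q (Fin.castLE hkm r)) u).toNat + 1)),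
      (∏ r : Fin k, ((pairZ (q (Fin.castLE hkm r)) u).toNat.choose (i r) : K)) *
        x (u + ∑ r : Fin k, (i r : ℤ) • e2 r) *
        y (u + ∑ r : Fin k, (pairZ (q (Fin.castLE hkm r)) u - (i r : ℤ)) • e1 r)

noncomputable def xtau {n m k : ℕ} (K : Type*) [Field K] (hkm : k ≤ m)
    (q : Fin m → Fin n → ℤ) : (Fin n → ℤ) → K :=
  fun u => if ∀ r : Fin k, pairZ (q (Fin.castLE hkm r)) u = 0 then 1 else 0

section AuxA
variable {n : ℕ}

lemma pairZ_add (v a b : Fin n → ℤ) : pairZ v (a + b) = pairZ v a + pairZ v b := by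
  simp [pairZ, mul_add, Finset.sum_add_distrib]

lemma pairZ_zero (v : Fin n → ℤ) : pairZ v 0 = 0 := by simp [pairZ]

lemma pairZ_neg (v a : Fin n → ℤ) : pairZ v (-a) = -pairZ v a := by
  simp [pairZ]

lemma pairZ_sub (v a b : Fin n → ℤ) : pairZ v (a - b) = pairZ v a - pairZ v b := by
  simp [pairZ, mul_sub, Finset.sum_sub_distrib]

lemma pairZ_smul (v : Fin n → ℤ) (c : ℤ) (a : Fin n → ℤ) :
    pairZ v (c • a) = c * pairZ v a := by
  simp [pairZ, Finset.mul_sum, mul_left_comm]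

lemma pairZ_sum {ι : Type*} (v : Fin n → ℤ) (T : Finset ι) (g : ι → Fin n → ℤ) :
    pairZ v (∑ r ∈ T, g r) = ∑ r ∈ T, pairZ v (g r) := by
  classical
  induction T using Finset.induction_on with
  | empty => simp [pairZ_zero]
  | insert _ _ h ih => rw [Finset.sum_insert h, Finset.sum_insert h, pairZ_add, ih]

end AuxA

section AuxB
variable {n k : ℕ} {K : Type*} [Field K] (q : Fin k → Fin n → ℤ)

lemma InS_zero : InS q (0 : Fin n → ℤ) := fun j => le_of_eq (pairZ_zero _).symm

lemma InS_add {u v : Fin n → ℤ} (hu : InS q u) (hv : InS q v) : InS q (u + v) := by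
  intro j; rw [pairZ_add]; exact add_nonneg (hu j) (hv j)

lemma InS_nsmul {u : Fin n → ℤ} (hu : InS q u) (c : ℕ) : InS q ((c : ℤ) • u) := by
  intro j; rw [pairZ_smul]
  exact mul_nonneg (Int.natCast_nonneg c) (hu j)

lemma InS_of_zero {u : Fin n → ℤ} (h : ∀ j, pairZ (q j) u = 0) : InS q u :=
  fun j => le_of_eq (h j).symm

lemma InS_neg_of_zero {u : Fin n → ℤ} (h : ∀ j, pairZ (q j) u = 0) : InS q (-u) :=
  fun j => by rw [pairZ_neg, h j]; norm_num

lemma InS_sum {ι : Type*} (T : Finset ι) (g : ι → Fin n → ℤ)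
    (hg : ∀ r ∈ T, InS q (g r)) : InS q (∑ r ∈ T, g r) := by
  classical
  induction T using Finset.induction_on with
  | empty => simpa using InS_zero q
  | @insert a T ha ih =>
      rw [Finset.sum_insert ha]
      exact InS_add q (hg a (Finset.mem_insert_self a T))
        (ih fun r hr => hg r (Finset.mem_insert_of_mem hr))

variable {x : (Fin n → ℤ) → K}

lemma pt_pow (hx : IsPoint q x) {s : Fin n → ℤ} (hs : InS q s) (c : ℕ) :
    x ((c : ℤ) • s) = x s ^ c := by
  induction c with
  | zero => simpa using hx.1
  | succ c ih =>
      have h : ((c + 1 : ℕ) : ℤ) • s = (c : ℤ) • s + s := by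
        push_cast; rw [add_smul, one_smul]
      rw [h, hx.2 _ _ (InS_nsmul q hs c) hs, ih, pow_succ]

lemma pt_inv0 (hx : IsPoint q x) {s : Fin n → ℤ} (hs : ∀ j, pairZ (q j) s = 0) :
    x s * x (-s) = 1 := by
  rw [← hx.2 s (-s) (InS_of_zero q hs) (InS_neg_of_zero q hs)]
  simpa using hx.1

lemma pt_sum (hx : IsPoint q x) (s : Fin k → Fin n → ℤ) (hs : ∀ r, InS q (s r))
    (c : Fin k → ℕ) (T : Finset (Fin k)) :
    ∀ v : Fin n → ℤ, InS q v →
      x (v + ∑ r ∈ T, (c r : ℤ) • s r) = x v * ∏ r ∈ T, x (s r) ^ c r := by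
  classical
  induction T using Finset.induction_on with
  | empty => intro v hv; simp
  | @insert a T ha ih =>
      intro v hv
      rw [Finset.sum_insert ha, Finset.prod_insert ha]
      have h1 : v + ((c a : ℤ) • s a + ∑ r ∈ T, (c r : ℤ) • s r)
          = (v + (c a : ℤ) • s a) + ∑ r ∈ T, (c r : ℤ) • s r := by abel
      rw [h1, ih _ (InS_add q hv (InS_nsmul q (hs a) (c a))),
        hx.2 v _ hv (InS_nsmul q (hs a) (c a)), pt_pow q hx (hs a)]
      ring

end AuxB

section Main
variable {n k : ℕ} {K : Type*} [Field K]
variable (q e1 e2 : Fin k → Fin n → ℤ)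

lemma pair_ne1 (he1 : Compatible (le_refl k) q e1) (r s : Fin k) :
    pairZ (q s) (-(e1 r)) = if r = s then 1 else 0 := by
  have h1 : ∀ r s : Fin k, pairZ (q s) (e1 r) = if r = s then -1 else 0 := he1.1
  rw [pairZ_neg, h1 r s]; split <;> norm_num

lemma InS_ne1 (he1 : Compatible (le_refl k) q e1) (r : Fin k) : InS q (-(e1 r)) := by
  intro s; rw [pair_ne1 q e1 he1 r s]; split <;> norm_num

lemma pair_f (he1 : Compatible (le_refl k) q e1) (he2 : Compatible (le_refl k) q e2)
    (r s : Fin k) : pairZ (q s) (e2 r - e1 r) = 0 := by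
  have h1 : ∀ r s : Fin k, pairZ (q s) (e1 r) = if r = s then -1 else 0 := he1.1
  have h2 : ∀ r s : Fin k, pairZ (q s) (e2 r) = if r = s then -1 else 0 := he2.1
  rw [pairZ_sub, h1 r s, h2 r s]
  ring

lemma InS_f (he1 : Compatible (le_refl k) q e1) (he2 : Compatible (le_refl k) q e2)
    (r : Fin k) : InS q (e2 r - e1 r) :=
  InS_of_zero q (pair_f q e1 e2 he1 he2 r)

lemma pair_w (he1 : Compatible (le_refl k) q e1) (u : Fin n → ℤ) (s : Fin k) :
    pairZ (q s) (u + ∑ r, pairZ (q r) u • e1 r) = 0 := by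
  rw [pairZ_add, pairZ_sum]
  have h : ∀ r : Fin k, pairZ (q s) (pairZ (q r) u • e1 r)
      = if r = s then -(pairZ (q r) u) else 0 := by
    intro r
    have h1 : ∀ r s : Fin k, pairZ (q s) (e1 r) = if r = s then -1 else 0 := he1.1
    rw [pairZ_smul, h1 r s]
    split <;> ring
  rw [Finset.sum_congr rfl fun r _ => h r, Finset.sum_ite_eq' univ s]
  simp

lemma closed_form (he1 : Compatible (le_refl k) q e1) (he2 : Compatible (le_refl k) q e2)
    {x y : (Fin n → ℤ) → K} (hx : IsPoint q x) (hy : IsPoint q y)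
    (u : Fin n → ℤ) (hu : InS q u) :
    rmul (le_refl k) q e1 e2 x y u =
      x (u + ∑ r, pairZ (q r) u • e1 r) * y (u + ∑ r, pairZ (q r) u • e1 r) *
      ∏ r, (x (-(e1 r)) + x (e2 r - e1 r) * y (-(e1 r))) ^ (pairZ (q r) u).toNat := by
  classical
  have hw0 : ∀ s, pairZ (q s) (u + ∑ r, pairZ (q r) u • e1 r) = 0 := pair_w q e1 he1 u
  have hwS : InS q (u + ∑ r, pairZ (q r) u • e1 r) := InS_of_zero q hw0
  have hne1 : ∀ r, InS q (-(e1 r)) := InS_ne1 q e1 he1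
  have hfS : ∀ r, InS q (e2 r - e1 r) := InS_f q e1 e2 he1 he2
  have hunfold : rmul (le_refl k) q e1 e2 x y u =
      ∑ i ∈ Fintype.piFinset (fun r : Fin k =>
          Finset.range ((pairZ (q r) u).toNat + 1)),
        (∏ r : Fin k, ((pairZ (q r) u).toNat.choose (i r) : K)) *
          x (u + ∑ r : Fin k, (i r : ℤ) • e2 r) *
          y (u + ∑ r : Fin k, (pairZ (q r) u - (i r : ℤ)) • e1 r) := rfl
  rw [hunfold]
  have hstep : ∀ i ∈ Fintype.piFinset (fun r : Fin k =>
      Finset.range ((pairZ (q r) u).toNat + 1)),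
      (∏ r : Fin k, ((pairZ (q r) u).toNat.choose (i r) : K)) *
        x (u + ∑ r : Fin k, (i r : ℤ) • e2 r) *
        y (u + ∑ r : Fin k, (pairZ (q r) u - (i r : ℤ)) • e1 r)
      = x (u + ∑ r, pairZ (q r) u • e1 r) * y (u + ∑ r, pairZ (q r) u • e1 r) *
        ∏ r : Fin k, (((pairZ (q r) u).toNat.choose (i r) : K) *
          ((x (e2 r - e1 r) * y (-(e1 r))) ^ (i r) *
            x (-(e1 r)) ^ ((pairZ (q r) u).toNat - i r))) := by
    intro i hi
    have hiD : ∀ r, i r ≤ (pairZ (q r) u).toNat := fun r =>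
      Nat.lt_succ_iff.mp (Finset.mem_range.mp (Fintype.mem_piFinset.mp hi r))
    have hc : ∀ r, (((pairZ (q r) u).toNat - i r : ℕ) : ℤ) = pairZ (q r) u - i r := by
      intro r
      rw [Nat.cast_sub (hiD r), Int.toNat_of_nonneg (hu r)]
    have hvec1 : u + ∑ r : Fin k, (i r : ℤ) • e2 r
        = ((u + ∑ r, pairZ (q r) u • e1 r) + ∑ r, (i r : ℤ) • (e2 r - e1 r))
          + ∑ r, (((pairZ (q r) u).toNat - i r : ℕ) : ℤ) • (-(e1 r)) := by
      funext j
      simp only [Pi.add_apply, Finset.sum_apply, Pi.smul_apply, smul_eq_mul,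
        Pi.sub_apply, Pi.neg_apply]
      have key : ∀ r : Fin k, (i r : ℤ) * e2 r j
          = pairZ (q r) u * e1 r j + ((i r : ℤ) * (e2 r j - e1 r j)
            + (((pairZ (q r) u).toNat - i r : ℕ) : ℤ) * (-(e1 r j))) := by
        intro r; rw [hc r]; ring
      rw [Finset.sum_congr rfl fun r _ => key r, Finset.sum_add_distrib,
        Finset.sum_add_distrib]
      ring
    have hvec2 : u + ∑ r : Fin k, (pairZ (q r) u - (i r : ℤ)) • e1 r
        = (u + ∑ r, pairZ (q r) u • e1 r) + ∑ r, (i r : ℤ) • (-(e1 r)) := by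
      funext j
      simp only [Pi.add_apply, Finset.sum_apply, Pi.smul_apply, smul_eq_mul,
        Pi.neg_apply]
      have key : ∀ r : Fin k, (pairZ (q r) u - (i r : ℤ)) * e1 r j
          = pairZ (q r) u * e1 r j + (i r : ℤ) * (-(e1 r j)) := by
        intro r; ring
      rw [Finset.sum_congr rfl fun r _ => key r, Finset.sum_add_distrib]
      ring
    rw [hvec1, hvec2]
    rw [pt_sum q hx (fun r => -(e1 r)) hne1 (fun r => (pairZ (q r) u).toNat - i r) univ _
        (InS_add q hwS (InS_sum q univ _ fun r _ => InS_nsmul q (hfS r) (i r))),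
      pt_sum q hx (fun r => e2 r - e1 r) hfS (fun r => i r) univ _ hwS,
      pt_sum q hy (fun r => -(e1 r)) hne1 (fun r => i r) univ _ hwS]
    simp only [Finset.prod_mul_distrib, mul_pow]
    ring
  rw [Finset.sum_congr rfl hstep]
  rw [← Finset.mul_sum,
    ← Finset.prod_univ_sum (fun r : Fin k => Finset.range ((pairZ (q r) u).toNat + 1))
      (fun r j => ((pairZ (q r) u).toNat.choose j : K) *
        ((x (e2 r - e1 r) * y (-(e1 r))) ^ j *
          x (-(e1 r)) ^ ((pairZ (q r) u).toNat - j)))]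
  congr 1
  apply Finset.prod_congr rfl
  intro r _
  rw [add_comm (x (-(e1 r))), add_pow]
  apply Finset.sum_congr rfl
  intro j hj
  ring

end Main
section Part2
variable {n k : ℕ} {K : Type*} [Field K]
variable (q e1 e2 : Fin k → Fin n → ℤ)

lemma wadd (u v : Fin n → ℤ) :
    (u + v) + ∑ r : Fin k, (pairZ (q r) u + pairZ (q r) v) • e1 r
      = (u + ∑ r, pairZ (q r) u • e1 r) + (v + ∑ r, pairZ (q r) v • e1 r) := by
  funext j
  simp only [Pi.add_apply, Finset.sum_apply, Pi.smul_apply, smul_eq_mul]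
  have key : ∀ r : Fin k, (pairZ (q r) u + pairZ (q r) v) * e1 r j
      = pairZ (q r) u * e1 r j + pairZ (q r) v * e1 r j := fun r => by ring
  rw [Finset.sum_congr rfl fun r _ => key r, Finset.sum_add_distrib]
  ring

lemma cf_L0 (he1 : Compatible (le_refl k) q e1) (he2 : Compatible (le_refl k) q e2)
    {x y : (Fin n → ℤ) → K} (hx : IsPoint q x) (hy : IsPoint q y)
    {v : Fin n → ℤ} (hv0 : ∀ r : Fin k, pairZ (q r) v = 0) :
    rmul (le_refl k) q e1 e2 x y v = x v * y v := by
  rw [closed_form q e1 e2 he1 he2 hx hy v (InS_of_zero q hv0)]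
  simp [hv0]

lemma cf_ne1 (he1 : Compatible (le_refl k) q e1) (he2 : Compatible (le_refl k) q e2)
    {x y : (Fin n → ℤ) → K} (hx : IsPoint q x) (hy : IsPoint q y) (r0 : Fin k) :
    rmul (le_refl k) q e1 e2 x y (-(e1 r0))
      = x (-(e1 r0)) + x (e2 r0 - e1 r0) * y (-(e1 r0)) := by
  rw [closed_form q e1 e2 he1 he2 hx hy (-(e1 r0)) (InS_ne1 q e1 he1 r0)]
  have hp : ∀ s, pairZ (q s) (-(e1 r0)) = if r0 = s then 1 else 0 := pair_ne1 q e1 he1 r0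
  simp only [hp]
  have hsum : (∑ r : Fin k, (if r0 = r then (1:ℤ) else 0) • e1 r) = e1 r0 := by
    simp [ite_smul]
  rw [hsum, neg_add_cancel, hx.1, hy.1, one_mul, one_mul]
  simp only [apply_ite Int.toNat, Int.toNat_one, Int.toNat_zero, pow_ite, pow_one,
    pow_zero, Finset.prod_ite_eq, Finset.mem_univ, if_true]

lemma ispoint_rmul (he1 : Compatible (le_refl k) q e1) (he2 : Compatible (le_refl k) q e2)
    {x y : (Fin n → ℤ) → K} (hx : IsPoint q x) (hy : IsPoint q y) :
    IsPoint q (rmul (le_refl k) q e1 e2 x y) := by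
  constructor
  · rw [cf_L0 q e1 e2 he1 he2 hx hy (fun r => pairZ_zero _), hx.1, hy.1, one_mul]
  · intro u v hu hv
    rw [closed_form q e1 e2 he1 he2 hx hy _ (InS_add q hu hv),
      closed_form q e1 e2 he1 he2 hx hy u hu, closed_form q e1 e2 he1 he2 hx hy v hv]
    simp only [pairZ_add]
    rw [wadd q e1 u v,
      hx.2 _ _ (InS_of_zero q (pair_w q e1 he1 u)) (InS_of_zero q (pair_w q e1 he1 v)),
      hy.2 _ _ (InS_of_zero q (pair_w q e1 he1 u)) (InS_of_zero q (pair_w q e1 he1 v))]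
    have hexp : ∀ r : Fin k, (pairZ (q r) u + pairZ (q r) v).toNat
        = (pairZ (q r) u).toNat + (pairZ (q r) v).toNat :=
      fun r => Int.toNat_add (hu r) (hv r)
    simp only [hexp, pow_add, Finset.prod_mul_distrib]
    ring

lemma ispoint_xtau : IsPoint q (xtau K (le_refl k) q) := by
  constructor
  · exact if_pos fun r => pairZ_zero _
  · intro u v hu hv
    have hsplit : (∀ r : Fin k, pairZ (q r) (u + v) = 0)
        ↔ ((∀ r : Fin k, pairZ (q r) u = 0) ∧ (∀ r : Fin k, pairZ (q r) v = 0)) := by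
      constructor
      · intro h
        constructor <;> intro r <;>
          (have h1 := hu r; have h2 := hv r; have h3 := h r; rw [pairZ_add] at h3; omega)
      · rintro ⟨h1, h2⟩ r; rw [pairZ_add, h1 r, h2 r, add_zero]
    show (if ∀ r : Fin k, pairZ (q r) (u + v) = 0 then (1:K) else 0)
      = (if ∀ r : Fin k, pairZ (q r) u = 0 then (1:K) else 0)
        * (if ∀ r : Fin k, pairZ (q r) v = 0 then (1:K) else 0)
    by_cases h1 : ∀ r : Fin k, pairZ (q r) u = 0
    · by_cases h2 : ∀ r : Fin k, pairZ (q r) v = 0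
      · rw [if_pos h1, if_pos h2, if_pos (hsplit.mpr ⟨h1, h2⟩)]; ring
      · rw [if_pos h1, if_neg h2, if_neg (fun h => h2 (hsplit.mp h).2)]; ring
    · rw [if_neg h1, if_neg (fun h => h1 (hsplit.mp h).1)]; ring

lemma lemA (he1 : Compatible (le_refl k) q e1) {x : (Fin n → ℤ) → K} (hx : IsPoint q x)
    (u : Fin n → ℤ) (hu : InS q u) :
    x (u + ∑ r, pairZ (q r) u • e1 r) * ∏ r : Fin k, x (-(e1 r)) ^ (pairZ (q r) u).toNat
      = x u := by
  have hvec : u = (u + ∑ r, pairZ (q r) u • e1 r)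
      + ∑ r : Fin k, (((pairZ (q r) u).toNat : ℕ) : ℤ) • (-(e1 r)) := by
    funext j
    simp only [Pi.add_apply, Finset.sum_apply, Pi.smul_apply, smul_eq_mul, Pi.neg_apply]
    have key : ∀ r : Fin k, pairZ (q r) u * e1 r j
        + ((pairZ (q r) u).toNat : ℤ) * (-(e1 r j)) = 0 := by
      intro r; rw [Int.toNat_of_nonneg (hu r)]; ring
    rw [add_assoc, ← Finset.sum_add_distrib, Finset.sum_eq_zero fun r _ => key r, add_zero]
  conv_rhs => rw [hvec]
  rw [pt_sum q hx (fun r => -(e1 r)) (InS_ne1 q e1 he1) (fun r => (pairZ (q r) u).toNat)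
    univ _ (InS_of_zero q (pair_w q e1 he1 u))]

lemma xtau_ne1 (he1 : Compatible (le_refl k) q e1) (r : Fin k) :
    xtau K (le_refl k) q (-(e1 r)) = 0 := by
  apply if_neg
  intro h
  have h' : pairZ (q r) (-(e1 r)) = 0 := h r
  rw [pair_ne1 q e1 he1 r r] at h'
  simp at h'

lemma rmul_xtau_left (he1 : Compatible (le_refl k) q e1) (he2 : Compatible (le_refl k) q e2)
    {x : (Fin n → ℤ) → K} (hx : IsPoint q x) (u : Fin n → ℤ) (hu : InS q u) :
    rmul (le_refl k) q e1 e2 (xtau K (le_refl k) q) x u = x u := by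
  rw [closed_form q e1 e2 he1 he2 (ispoint_xtau q) hx u hu]
  have h1 : xtau K (le_refl k) q (u + ∑ r, pairZ (q r) u • e1 r) = 1 :=
    if_pos (pair_w q e1 he1 u)
  have h3 : ∀ r : Fin k, xtau K (le_refl k) q (e2 r - e1 r) = 1 :=
    fun r => if_pos (pair_f q e1 e2 he1 he2 r)
  simp only [h1, h3, xtau_ne1 q e1 he1, zero_add, one_mul]
  exact lemA q e1 he1 hx u hu

lemma rmul_xtau_right (he1 : Compatible (le_refl k) q e1) (he2 : Compatible (le_refl k) q e2)
    {x : (Fin n → ℤ) → K} (hx : IsPoint q x) (u : Fin n → ℤ) (hu : InS q u) :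
    rmul (le_refl k) q e1 e2 x (xtau K (le_refl k) q) u = x u := by
  rw [closed_form q e1 e2 he1 he2 hx (ispoint_xtau q) u hu]
  have h1 : xtau K (le_refl k) q (u + ∑ r, pairZ (q r) u • e1 r) = 1 :=
    if_pos (pair_w q e1 he1 u)
  simp only [h1, xtau_ne1 q e1 he1, mul_zero, add_zero, mul_one]
  exact lemA q e1 he1 hx u hu

end Part2
section Part3
variable {n k : ℕ} {K : Type*} [Field K]

noncomputable def yinv (q e1 e2 : Fin k → Fin n → ℤ) (x : (Fin n → ℤ) → K) :
    (Fin n → ℤ) → K :=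
  fun u => x (-(u + ∑ r, pairZ (q r) u • e1 r)) *
    ∏ r : Fin k, (-(x (-(e1 r)) * x (e1 r - e2 r))) ^ (pairZ (q r) u).toNat

variable (q e1 e2 : Fin k → Fin n → ℤ)

lemma yinv_L0 {x : (Fin n → ℤ) → K} {v : Fin n → ℤ}
    (hv0 : ∀ r : Fin k, pairZ (q r) v = 0) : yinv q e1 e2 x v = x (-v) := by
  simp [yinv, hv0]

lemma yinv_ne1 (he1 : Compatible (le_refl k) q e1) {x : (Fin n → ℤ) → K}
    (hx : IsPoint q x) (r0 : Fin k) :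
    yinv q e1 e2 x (-(e1 r0)) = -(x (-(e1 r0)) * x (e1 r0 - e2 r0)) := by
  have hp : ∀ s, pairZ (q s) (-(e1 r0)) = if r0 = s then 1 else 0 := pair_ne1 q e1 he1 r0
  simp only [yinv, hp]
  have hsum : (∑ r : Fin k, (if r0 = r then (1:ℤ) else 0) • e1 r) = e1 r0 := by
    simp [ite_smul]
  rw [hsum, neg_add_cancel, neg_zero, hx.1, one_mul]
  simp only [apply_ite Int.toNat, Int.toNat_one, Int.toNat_zero, pow_ite, pow_one,
    pow_zero, Finset.prod_ite_eq, Finset.mem_univ, if_true]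

lemma ispoint_yinv (he1 : Compatible (le_refl k) q e1) {x : (Fin n → ℤ) → K}
    (hx : IsPoint q x) : IsPoint q (yinv q e1 e2 x) := by
  constructor
  · simp [yinv, pairZ_zero, hx.1]
  · intro u v hu hv
    show x (-(u + v + ∑ r, pairZ (q r) (u + v) • e1 r)) * _ = _
    simp only [yinv, pairZ_add]
    rw [wadd q e1 u v, neg_add,
      hx.2 _ _ (InS_neg_of_zero q (pair_w q e1 he1 u)) (InS_neg_of_zero q (pair_w q e1 he1 v))]
    have hexp : ∀ r : Fin k, (pairZ (q r) u + pairZ (q r) v).toNat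
        = (pairZ (q r) u).toNat + (pairZ (q r) v).toNat :=
      fun r => Int.toNat_add (hu r) (hv r)
    simp only [hexp, pow_add, Finset.prod_mul_distrib]
    ring

lemma prod_zero_pow (u : Fin n → ℤ) (hu : InS q u) :
    (∏ r : Fin k, (0:K) ^ (pairZ (q r) u).toNat) = xtau K (le_refl k) q u := by
  show _ = if ∀ r : Fin k, pairZ (q r) u = 0 then (1:K) else 0
  by_cases h : ∀ r : Fin k, pairZ (q r) u = 0
  · rw [if_pos h]
    apply Finset.prod_eq_one
    intro r _
    rw [h r]
    simp
  · rw [if_neg h]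
    push_neg at h
    obtain ⟨r, hr⟩ := h
    refine Finset.prod_eq_zero (Finset.mem_univ r) (zero_pow ?_)
    have := hu r
    omega

lemma rmul_yinv_right (he1 : Compatible (le_refl k) q e1) (he2 : Compatible (le_refl k) q e2)
    {x : (Fin n → ℤ) → K} (hx : IsPoint q x) (u : Fin n → ℤ) (hu : InS q u) :
    rmul (le_refl k) q e1 e2 x (yinv q e1 e2 x) u = xtau K (le_refl k) q u := by
  rw [closed_form q e1 e2 he1 he2 hx (ispoint_yinv q e1 e2 he1 hx) u hu,
    yinv_L0 q e1 e2 (pair_w q e1 he1 u)]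
  have hfac : ∀ r : Fin k,
      x (-(e1 r)) + x (e2 r - e1 r) * yinv q e1 e2 x (-(e1 r)) = 0 := by
    intro r
    rw [yinv_ne1 q e1 e2 he1 hx r]
    have h1 : x (e2 r - e1 r) * x (e1 r - e2 r) = 1 := by
      have h2 := pt_inv0 q hx (pair_f q e1 e2 he1 he2 r)
      rwa [neg_sub] at h2
    linear_combination (-(x (-(e1 r)))) * h1
  rw [pt_inv0 q hx (pair_w q e1 he1 u), one_mul]
  simp only [hfac]
  exact prod_zero_pow q u hu

lemma rmul_yinv_left (he1 : Compatible (le_refl k) q e1) (he2 : Compatible (le_refl k) q e2)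
    {x : (Fin n → ℤ) → K} (hx : IsPoint q x) (u : Fin n → ℤ) (hu : InS q u) :
    rmul (le_refl k) q e1 e2 (yinv q e1 e2 x) x u = xtau K (le_refl k) q u := by
  rw [closed_form q e1 e2 he1 he2 (ispoint_yinv q e1 e2 he1 hx) hx u hu,
    yinv_L0 q e1 e2 (pair_w q e1 he1 u)]
  have hfac : ∀ r : Fin k,
      yinv q e1 e2 x (-(e1 r)) + yinv q e1 e2 x (e2 r - e1 r) * x (-(e1 r)) = 0 := by
    intro r
    rw [yinv_ne1 q e1 e2 he1 hx r, yinv_L0 q e1 e2 (pair_f q e1 e2 he1 he2 r), neg_sub]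
    ring
  rw [mul_comm (x (-(u + ∑ r, pairZ (q r) u • e1 r))), pt_inv0 q hx (pair_w q e1 he1 u),
    one_mul]
  simp only [hfac]
  exact prod_zero_pow q u hu

lemma rmul_assoc (he1 : Compatible (le_refl k) q e1) (he2 : Compatible (le_refl k) q e2)
    {x y z : (Fin n → ℤ) → K} (hx : IsPoint q x) (hy : IsPoint q y) (hz : IsPoint q z)
    (u : Fin n → ℤ) (hu : InS q u) :
    rmul (le_refl k) q e1 e2 (rmul (le_refl k) q e1 e2 x y) z u
      = rmul (le_refl k) q e1 e2 x (rmul (le_refl k) q e1 e2 y z) u := by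
  have hxy := ispoint_rmul q e1 e2 he1 he2 hx hy
  have hyz := ispoint_rmul q e1 e2 he1 he2 hy hz
  rw [closed_form q e1 e2 he1 he2 hxy hz u hu, closed_form q e1 e2 he1 he2 hx hyz u hu,
    cf_L0 q e1 e2 he1 he2 hx hy (pair_w q e1 he1 u),
    cf_L0 q e1 e2 he1 he2 hy hz (pair_w q e1 he1 u)]
  have hA : ∀ r : Fin k, rmul (le_refl k) q e1 e2 x y (-(e1 r))
      = x (-(e1 r)) + x (e2 r - e1 r) * y (-(e1 r)) := cf_ne1 q e1 e2 he1 he2 hx hy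
  have hB : ∀ r : Fin k, rmul (le_refl k) q e1 e2 y z (-(e1 r))
      = y (-(e1 r)) + y (e2 r - e1 r) * z (-(e1 r)) := cf_ne1 q e1 e2 he1 he2 hy hz
  have hC : ∀ r : Fin k, rmul (le_refl k) q e1 e2 x y (e2 r - e1 r)
      = x (e2 r - e1 r) * y (e2 r - e1 r) :=
    fun r => cf_L0 q e1 e2 he1 he2 hx hy (pair_f q e1 e2 he1 he2 r)
  simp only [hA, hB, hC]
  congr 1
  · rw [mul_assoc]
  · exact Finset.prod_congr rfl fun r _ => by congr 1; ring

end Part3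

theorem statement_6 {n k : ℕ} {K : Type*} [Field K] [CharZero K]
    (hn : 1 ≤ n) (hk : 1 ≤ k)
    (q : Fin k → Fin n → ℤ) (e1 e2 : Fin k → Fin n → ℤ)
    (he1 : Compatible (le_refl k) q e1) (he2 : Compatible (le_refl k) q e2) :
    (∀ x y z : (Fin n → ℤ) → K, IsPoint q x → IsPoint q y → IsPoint q z →
      IsPoint q (rmul (le_refl k) q e1 e2 x y) ∧
      ∀ u : Fin n → ℤ, InS q u →
        rmul (le_refl k) q e1 e2 (rmul (le_refl k) q e1 e2 x y) z u
          = rmul (le_refl k) q e1 e2 x (rmul (le_refl k) q e1 e2 y z) u) ∧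
    IsPoint q (xtau K (le_refl k) q) ∧
    (∀ x : (Fin n → ℤ) → K, IsPoint q x → ∀ u : Fin n → ℤ, InS q u →
      rmul (le_refl k) q e1 e2 (xtau K (le_refl k) q) x u = x u ∧
      rmul (le_refl k) q e1 e2 x (xtau K (le_refl k) q) u = x u) ∧
    (∀ x : (Fin n → ℤ) → K, IsPoint q x →
      ∃ y : (Fin n → ℤ) → K, IsPoint q y ∧ ∀ u : Fin n → ℤ, InS q u →
        rmul (le_refl k) q e1 e2 x y u = xtau K (le_refl k) q u ∧
        rmul (le_refl k) q e1 e2 y x u = xtau K (le_refl k) q u) := by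
  refine ⟨fun x y z hx hy hz => ⟨ispoint_rmul q e1 e2 he1 he2 hx hy,
      fun u hu => rmul_assoc q e1 e2 he1 he2 hx hy hz u hu⟩,
    ispoint_xtau q,
    fun x hx u hu => ⟨rmul_xtau_left q e1 e2 he1 he2 hx u hu,
      rmul_xtau_right q e1 e2 he1 he2 hx u hu⟩,
    fun x hx => ⟨yinv q e1 e2 x, ispoint_yinv q e1 e2 he1 hx,
      fun u hu => ⟨rmul_yinv_right q e1 e2 he1 he2 hx u hu,
        rmul_yinv_left q e1 e2 he1 he2 hx u hu⟩⟩⟩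
end

section
/- Assume p_1, …, p_k form part of a ℤ-basis of ℤ^n (the face τ is regular) and that there exists v ∈ ℤ^n with ⟨p_r, v⟩ = 0 for all r ≤ k and ⟨q_j, v⟩ > 0 for all j > k (τ is a face of σ). Then for any vectors c_1, …, c_k ∈ ℤ^n satisfying ⟨p_s, c_r⟩ = 0 for all r, s ≤ k (i.e. c_r ∈ τ^⊥ ∩ M), there exists a set of Demazure roots e_1^{(r)}, e_2^{(r)} (r = 1, …, k) compatible with τ such that e_1^{(r)} − e_2^{(r)} = c_r for all r. (This is the Lemma inside the proof of Proposition 4.3, which yields that every group G_χ̄ occurs as the group of invertible elements of a root monoid on X_σ.) -/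
set_option maxHeartbeats 1000000

open Finset

lemma pairZ_add_s9 {n : ℕ} (u x y : Fin n → ℤ) :
    pairZ u (x + y) = pairZ u x + pairZ u y := by
  simp [pairZ, mul_add, Finset.sum_add_distrib]

lemma pairZ_smul_s9 {n : ℕ} (u x : Fin n → ℤ) (z : ℤ) :
    pairZ u (z • x) = z * pairZ u x := by
  rw [pairZ, pairZ, Finset.mul_sum]
  exact Finset.sum_congr rfl fun i _ => by simp [Pi.smul_apply]; ring

lemma coord_eq_sum {n : ℕ} (b : Module.Basis (Fin n) ℤ (Fin n → ℤ)) (i : Fin n) (x : Fin n → ℤ) :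
    b.coord i x = ∑ j, x j * b.coord i (Pi.single j 1) := by
  conv_lhs => rw [show x = ∑ j, x j • Pi.single j (1 : ℤ) by
    ext t; simp [Pi.single_apply, mul_ite]]
  rw [map_sum]
  exact Finset.sum_congr rfl fun j _ => by rw [map_smul, smul_eq_mul]

theorem statement_9 {n m k : ℕ} (hn : 1 ≤ n) (hk : 1 ≤ k) (hkm : k ≤ m) (hkn : k ≤ n)
    (q : Fin m → Fin n → ℤ)
    (b : Module.Basis (Fin n) ℤ (Fin n → ℤ))
    (hb : ∀ r : Fin k, b (Fin.castLE hkn r) = q (Fin.castLE hkm r))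
    (hface : ∃ v : Fin n → ℤ, (∀ r : Fin k, pairZ (q (Fin.castLE hkm r)) v = 0) ∧
      ∀ j : Fin m, k ≤ (j : ℕ) → 0 < pairZ (q j) v)
    (c : Fin k → Fin n → ℤ)
    (hc : ∀ r s : Fin k, pairZ (q (Fin.castLE hkm s)) (c r) = 0) :
    ∃ e1 e2 : Fin k → Fin n → ℤ,
      Compatible hkm q e1 ∧ Compatible hkm q e2 ∧ ∀ r : Fin k, e1 r - e2 r = c r := by
  obtain ⟨v, hv0, hvpos⟩ := hface
  set w : Fin k → Fin n → ℤ :=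
    fun r j => - b.coord (Fin.castLE hkn r) (Pi.single j 1) with hw
  have key : ∀ (r : Fin k) (s : Fin n),
      pairZ (b s) (w r) = if s = Fin.castLE hkn r then -1 else 0 := by
    intro r s
    have : pairZ (b s) (w r) = - b.coord (Fin.castLE hkn r) (b s) := by
      rw [coord_eq_sum b (Fin.castLE hkn r) (b s), pairZ, ← Finset.sum_neg_distrib]
      exact Finset.sum_congr rfl fun i _ => by simp only [hw]; ring
    rw [this, Module.Basis.coord_apply, Module.Basis.repr_self, Finsupp.single_apply]
    split_ifs <;> simp
  have keyq : ∀ (r s : Fin k),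
      pairZ (q (Fin.castLE hkm s)) (w r) = if r = s then -1 else 0 := by
    intro r s
    rw [← hb s, key]
    have : (Fin.castLE hkn s = Fin.castLE hkn r) ↔ (r = s) := by
      constructor
      · intro h; exact (Fin.castLE_injective hkn h).symm
      · intro h; rw [h]
    simp [this]
  set N : ℤ := ∑ r : Fin k, ∑ j : Fin m,
      (|pairZ (q j) (w r)| + |pairZ (q j) (w r + c r)|) with hN
  have hN0 : 0 ≤ N := by
    apply Finset.sum_nonneg; intro r _
    apply Finset.sum_nonneg; intro j _
    positivity
  have habs : ∀ (r : Fin k) (j : Fin m),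
      |pairZ (q j) (w r)| + |pairZ (q j) (w r + c r)| ≤ N := by
    intro r j
    have h1 : |pairZ (q j) (w r)| + |pairZ (q j) (w r + c r)|
        ≤ ∑ j' : Fin m, (|pairZ (q j') (w r)| + |pairZ (q j') (w r + c r)|) :=
      Finset.single_le_sum
        (f := fun j' => |pairZ (q j') (w r)| + |pairZ (q j') (w r + c r)|)
        (fun i _ => by positivity) (Finset.mem_univ j)
    have h2 : (∑ j' : Fin m, (|pairZ (q j') (w r)| + |pairZ (q j') (w r + c r)|)) ≤ N :=
      Finset.single_le_sum
        (f := fun r' => ∑ j' : Fin m, (|pairZ (q j') (w r')| + |pairZ (q j') (w r' + c r')|))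
        (fun i _ => Finset.sum_nonneg fun _ _ => by positivity) (Finset.mem_univ r)
    linarith
  refine ⟨fun r => w r + c r + N • v, fun r => w r + N • v, ⟨?_, ?_⟩, ⟨?_, ?_⟩, ?_⟩
  · intro r s
    rw [pairZ_add_s9, pairZ_add_s9, pairZ_smul_s9, keyq, hc, hv0]
    ring
  · intro r j hj
    have h1 : 1 ≤ pairZ (q j) v := hvpos j hj
    rw [pairZ_add_s9, pairZ_add_s9, pairZ_smul_s9]
    have h2 : |pairZ (q j) (w r + c r)| ≤ N := by
      have := habs r j
      have := abs_nonneg (pairZ (q j) (w r))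
      linarith
    have h3 : -N ≤ pairZ (q j) (w r) + pairZ (q j) (c r) := by
      rw [pairZ_add_s9] at h2
      have := neg_abs_le (pairZ (q j) (w r) + pairZ (q j) (c r))
      linarith
    have h4 : N ≤ N * pairZ (q j) v := le_mul_of_one_le_right hN0 h1
    linarith
  · intro r s
    rw [pairZ_add_s9, pairZ_smul_s9, keyq, hv0]
    ring
  · intro r j hj
    have h1 : 1 ≤ pairZ (q j) v := hvpos j hj
    rw [pairZ_add_s9, pairZ_smul_s9]
    have h2 : |pairZ (q j) (w r)| ≤ N := by
      have := habs r j
      have := abs_nonneg (pairZ (q j) (w r + c r))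
      linarith
    have h3 : -N ≤ pairZ (q j) (w r) := by
      have := neg_abs_le (pairZ (q j) (w r)); linarith
    have h4 : N ≤ N * pairZ (q j) v := le_mul_of_one_le_right hN0 h1
    linarith
  · intro r
    ext i
    simp
end
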